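/- Let f : X → Y be a continuous affine surjective open map of compact convex subsets of Hausdorff locally convex spaces such that every fiber f⁻¹(y) has more than one point. Then for every nonempty compact convex subset B ⊆ Y, there are at least two distinct nonempty compact convex subsets A ⊆ X with f(A) = B. -/

import Mathlib

open Set Topology Pointwise

section aux
set_option linter.unusedSectionVars false
variable {E : Type*} [AddCommGroup E] [Module ℝ E] [TopologicalSpace E]
    [IsTopologicalAddGroup E] [ContinuousSMul ℝ E] [T2Space E] [LocallyConvexSpace ℝ E]

lemma my_isCompact_convexJoin {s t : Set E} (hs : IsCompact s) (ht : IsCompact t) :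
    IsCompact (convexJoin ℝ s t) := by
  have heq : convexJoin ℝ s t =
      (fun p : ℝ × E × E => p.1 • p.2.1 + (1 - p.1) • p.2.2) '' (Icc (0:ℝ) 1 ×ˢ s ×ˢ t) := by
    ext x
    constructor
    · rw [mem_convexJoin]
      rintro ⟨a, ha, b, hb, u, v, hu, hv, huv, rfl⟩
      refine ⟨(u, a, b), ⟨⟨hu, by linarith⟩, ha, hb⟩, ?_⟩
      simp only []
      rw [show (1:ℝ) - u = v by linarith]
    · rintro ⟨⟨u, a, b⟩, ⟨⟨hu0, hu1⟩, ha, hb⟩, rfl⟩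
      rw [mem_convexJoin]
      exact ⟨a, ha, b, hb, u, 1 - u, hu0, by linarith, by ring, rfl⟩
  rw [heq]
  exact (isCompact_Icc.prod (hs.prod ht)).image (by fun_prop)

lemma my_isCompact_convexHull_biUnion {ι : Type*} (s : Finset ι) (C : ι → Set E)
    (hcomp : ∀ i ∈ s, IsCompact (C i)) (hconv : ∀ i ∈ s, Convex ℝ (C i)) :
    IsCompact (convexHull ℝ (⋃ i ∈ s, C i)) := by
  classical
  induction s using Finset.induction_on with
  | empty => simp
  | @insert a s ha ih =>
    have hUnion : (⋃ i ∈ insert a s, C i) = C a ∪ ⋃ i ∈ s, C i := by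
      simp [Set.biUnion_insert]
    rw [hUnion]
    have hCa : IsCompact (C a) := hcomp a (Finset.mem_insert_self a s)
    have hCav : Convex ℝ (C a) := hconv a (Finset.mem_insert_self a s)
    have ih' : IsCompact (convexHull ℝ (⋃ i ∈ s, C i)) :=
      ih (fun i hi => hcomp i (Finset.mem_insert_of_mem hi))
        (fun i hi => hconv i (Finset.mem_insert_of_mem hi))
    by_cases h1 : (C a).Nonempty
    · by_cases h2 : (⋃ i ∈ s, C i).Nonempty
      · rw [convexHull_union h1 h2, hCav.convexHull_eq]
        exact my_isCompact_convexJoin hCa ih'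
      · rw [Set.not_nonempty_iff_eq_empty] at h2
        rw [h2, Set.union_empty, hCav.convexHull_eq]
        exact hCa
    · rw [Set.not_nonempty_iff_eq_empty] at h1
      rw [h1, Set.empty_union]
      exact ih'

lemma my_extreme_mem_piece {ι : Type*} {B : Set E} (hB : Convex ℝ B)
    {y : E} (hy : y ∈ B.extremePoints ℝ) (s : Finset ι) (C : ι → Set E)
    (hCB : ∀ i ∈ s, C i ⊆ B) (hmem : y ∈ convexHull ℝ (⋃ i ∈ s, C i)) :
    ∃ i ∈ s, y ∈ convexHull ℝ (C i) := by
  classical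
  induction s using Finset.induction_on with
  | empty => simp at hmem
  | @insert a s ha ih =>
    have hUnion : (⋃ i ∈ insert a s, C i) = C a ∪ ⋃ i ∈ s, C i := by
      simp [Set.biUnion_insert]
    rw [hUnion] at hmem
    have hCaB : C a ⊆ B := hCB a (Finset.mem_insert_self a s)
    have hCB' : ∀ i ∈ s, C i ⊆ B := fun i hi => hCB i (Finset.mem_insert_of_mem hi)
    by_cases h1 : (C a).Nonempty
    · by_cases h2 : (⋃ i ∈ s, C i).Nonempty
      · rw [convexHull_union h1 h2, mem_convexJoin] at hmem
        obtain ⟨p, hp, q, hq, hseg⟩ := hmem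
        have hpB : p ∈ B := by
          have : convexHull ℝ (C a) ⊆ B := convexHull_min hCaB hB
          exact this hp
        have hqB : q ∈ B := by
          have hsubB : (⋃ i ∈ s, C i) ⊆ B := Set.iUnion₂_subset hCB'
          exact (convexHull_min hsubB hB) hq
        have hext := (mem_extremePoints_iff_forall_segment.1 hy).2 p hpB q hqB hseg
        rcases hext with rfl | rfl
        · exact ⟨a, Finset.mem_insert_self a s, hp⟩
        · obtain ⟨i, hi, hyi⟩ := ih hCB' hq
          exact ⟨i, Finset.mem_insert_of_mem hi, hyi⟩
      · rw [Set.not_nonempty_iff_eq_empty] at h2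
        rw [h2, Set.union_empty] at hmem
        exact ⟨a, Finset.mem_insert_self a s, hmem⟩
    · rw [Set.not_nonempty_iff_eq_empty] at h1
      rw [h1, Set.empty_union] at hmem
      obtain ⟨i, hi, hyi⟩ := ih hCB' hmem
      exact ⟨i, Finset.mem_insert_of_mem hi, hyi⟩

/-- Milman-type lemma: an extreme point of a compact convex set `B` does not lie in the
closed convex hull of the part of `B` outside any open neighbourhood of it. -/
lemma my_milman {B V : Set E} (hB : IsCompact B) (hBc : Convex ℝ B)
    {y : E} (hy : y ∈ B.extremePoints ℝ) (hV : IsOpen V) (hyV : y ∈ V) :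
    y ∉ closure (convexHull ℝ (B \ V)) := by
  classical
  intro hmem
  set t : Set E := B \ V with htdef
  have htB : t ⊆ B := diff_subset
  have htc : IsCompact t := hB.inter_right hV.isClosed_compl
  have hyt : y ∉ t := fun h => h.2 hyV
  -- a neighborhood W of 0 such that y - w ∉ t for w ∈ W
  have hWnhds : (fun w : E => y - w) ⁻¹' tᶜ ∈ 𝓝 (0 : E) := by
    have hcont : Continuous fun w : E => y - w := by fun_prop
    have : tᶜ ∈ 𝓝 (y - 0) := by
      rw [sub_zero]
      exact (htc.isClosed.isOpen_compl).mem_nhds hyt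
    exact hcont.continuousAt.preimage_mem_nhds this
  set W : Set E := (fun w : E => y - w) ⁻¹' tᶜ with hWdef
  -- W₂ with W₂ + W₂ ⊆ W
  obtain ⟨W₂, hW₂open, hW₂0, hW₂add⟩ := exists_open_nhds_zero_add_subset hWnhds
  -- convex open U ∋ 0 with U ⊆ W₂
  obtain ⟨S, hSnhds, hSconv, hSsub⟩ :=
    (locallyConvexSpace_iff_exists_convex_subset ℝ E).1 (by infer_instance) 0 W₂
      (hW₂open.mem_nhds hW₂0)
  set U : Set E := interior S with hUdef
  have hUopen : IsOpen U := isOpen_interior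
  have hU0 : (0 : E) ∈ U := mem_interior_iff_mem_nhds.2 hSnhds
  have hUconv : Convex ℝ U := hSconv.interior
  have hUsub : U ⊆ W₂ := interior_subset.trans hSsub
  -- closure U ⊆ W₂ + W₂ ⊆ W
  have hclU : closure U ⊆ W := by
    intro x hx
    have hnbhd : (fun w => x + w) '' (-U) ∈ 𝓝 x := by
      have ho : IsOpen ((fun w => x + w) '' (-U)) := (isOpenMap_add_left x) _ hUopen.neg
      refine ho.mem_nhds ⟨0, by simpa using hU0, by simp⟩
    obtain ⟨p, hp1, hp2⟩ := mem_closure_iff_nhds.1 hx _ hnbhd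
    obtain ⟨b, hb, hbp⟩ := hp1
    have hbU : -b ∈ U := hb
    have hxpb : x = p + -b := by
      have hbp' : x + b = p := hbp
      rw [← hbp']; abel
    have : p + -b ∈ W₂ + W₂ := Set.add_mem_add (hUsub hp2) (hUsub hbU)
    rw [hxpb]
    exact hW₂add this
  -- translates
  set T : E → Set E := fun z => (fun w => z + w) '' U with hTdef
  have hTopen : ∀ z, IsOpen (T z) := fun z => (isOpenMap_add_left z) _ hUopen
  have hTmem : ∀ z, z ∈ T z := fun z => ⟨0, hU0, by simp⟩
  have hTconv : ∀ z, Convex ℝ (T z) := fun z => hUconv.translate z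
  -- cover t by finitely many translates
  obtain ⟨fs, hfs_mem, hfs_cover⟩ :=
    htc.elim_nhds_subcover T (fun z _ => (hTopen z).mem_nhds (hTmem z))
  -- the pieces
  set C : E → Set E := fun z => closure (convexHull ℝ (t ∩ T z)) with hCdef
  have hCcomp : ∀ z ∈ fs, IsCompact (C z) := by
    intro z _
    refine hB.of_isClosed_subset isClosed_closure ?_
    exact closure_minimal (convexHull_min (fun x hx => htB hx.1) hBc) hB.isClosed
  have hCconv : ∀ z ∈ fs, Convex ℝ (C z) := fun z _ => (convex_convexHull ℝ _).closure
  have hCB : ∀ z ∈ fs, C z ⊆ B := fun z _ =>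
    closure_minimal (convexHull_min (fun x hx => htB hx.1) hBc) hB.isClosed
  have hCsub : ∀ z, C z ⊆ (fun w => z + w) '' closure U := by
    intro z x hx
    have h1 : convexHull ℝ (t ∩ T z) ⊆ T z :=
      convexHull_min inter_subset_right (hTconv z)
    have h2 : closure ((fun w => z + w) '' U) = (fun w => z + w) '' closure U :=
      ((Homeomorph.addLeft z).image_closure U).symm
    have hx2 := closure_mono h1 hx
    rw [hTdef] at hx2
    simp only at hx2
    rw [h2] at hx2
    exact hx2
  -- t ⊆ union of pieces
  have htsub : t ⊆ ⋃ z ∈ fs, C z := by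
    intro x hx
    have := hfs_cover hx
    simp only [Set.mem_iUnion] at this ⊢
    obtain ⟨z, hz, hxz⟩ := this
    exact ⟨z, hz, subset_closure (subset_convexHull ℝ _ ⟨hx, hxz⟩)⟩
  have hDcomp : IsCompact (convexHull ℝ (⋃ z ∈ fs, C z)) :=
    my_isCompact_convexHull_biUnion fs C hCcomp hCconv
  have hymem : y ∈ convexHull ℝ (⋃ z ∈ fs, C z) :=
    (closure_minimal (convexHull_mono htsub) hDcomp.isClosed) hmem
  obtain ⟨z, hz, hyz⟩ := my_extreme_mem_piece hBc hy fs C hCB hymem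
  have hyCz : y ∈ C z := by rwa [((hCconv z hz).convexHull_eq)] at hyz
  obtain ⟨w, hw, heq⟩ := hCsub z hyCz
  have hwW : w ∈ W := hclU hw
  have hnot : y - w ∉ t := hwW
  have hzt : z ∈ t := hfs_mem z hz
  apply hnot
  have hzw : y - w = z := by
    have heq' : z + w = y := heq
    rw [← heq']; abel
  rwa [hzw]
end aux

lemma my_affine_sum {E F : Type*} [AddCommGroup E] [Module ℝ E] [AddCommGroup F] [Module ℝ F]
    {X : Set E} (hXv : Convex ℝ X) (f : E → F)
    (haff : ∀ x ∈ X, ∀ y ∈ X, ∀ t : ℝ, t ∈ Set.Icc (0:ℝ) 1 →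
      f (t • x + (1 - t) • y) = t • f x + (1 - t) • f y)
    {ι : Type*} (t : Finset ι) (w : ι → ℝ) (z : ι → E) (hw0 : ∀ i ∈ t, 0 ≤ w i)
    (hw1 : ∑ i ∈ t, w i = 1) (hz : ∀ i ∈ t, z i ∈ X) :
    (∑ i ∈ t, w i • z i) ∈ X ∧ f (∑ i ∈ t, w i • z i) = ∑ i ∈ t, w i • f (z i) := by
  classical
  induction t using Finset.induction_on generalizing w with
  | empty => simp at hw1
  | @insert a s ha ih =>
    have hw0s : ∀ i ∈ s, 0 ≤ w i := fun i hi => hw0 i (Finset.mem_insert_of_mem hi)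
    have hza : z a ∈ X := hz a (Finset.mem_insert_self a s)
    have hzs : ∀ i ∈ s, z i ∈ X := fun i hi => hz i (Finset.mem_insert_of_mem hi)
    have hsum : w a + ∑ i ∈ s, w i = 1 := by rwa [Finset.sum_insert ha] at hw1
    set σ : ℝ := ∑ i ∈ s, w i with hσdef
    have hσ0 : 0 ≤ σ := Finset.sum_nonneg hw0s
    rcases eq_or_lt_of_le hσ0 with hσz | hσpos
    · -- all weights in s vanish
      have hall : ∀ i ∈ s, w i = 0 := by
        intro i hi
        have := (Finset.sum_eq_zero_iff_of_nonneg hw0s).1 hσz.symm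
        exact this i hi
      have hwa : w a = 1 := by
        have : σ = 0 := hσz.symm
        rw [this] at hsum; linarith
      have hsz : ∑ i ∈ s, w i • z i = 0 :=
        Finset.sum_eq_zero fun i hi => by rw [hall i hi, zero_smul]
      have hsf : ∑ i ∈ s, w i • f (z i) = 0 :=
        Finset.sum_eq_zero fun i hi => by rw [hall i hi, zero_smul]
      rw [Finset.sum_insert ha, Finset.sum_insert ha, hsz, hsf, hwa]
      simp [hza]
    · -- σ > 0
      have hihyp : (∑ i ∈ s, (σ⁻¹ * w i) • z i) ∈ X ∧
          f (∑ i ∈ s, (σ⁻¹ * w i) • z i) = ∑ i ∈ s, (σ⁻¹ * w i) • f (z i) := by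
        refine ih (fun i => σ⁻¹ * w i) (fun i hi => mul_nonneg (inv_nonneg.2 hσ0) (hw0s i hi))
          ?_ hzs
        rw [← Finset.mul_sum]; exact inv_mul_cancel₀ (ne_of_gt hσpos)
      obtain ⟨hqX, hqf⟩ := hihyp
      set q : E := ∑ i ∈ s, (σ⁻¹ * w i) • z i with hqdef
      have hσq : σ • q = ∑ i ∈ s, w i • z i := by
        rw [hqdef, Finset.smul_sum]
        refine Finset.sum_congr rfl fun i hi => ?_
        rw [smul_smul, ← mul_assoc, mul_inv_cancel₀ (ne_of_gt hσpos), one_mul]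
      have hσqf : σ • f q = ∑ i ∈ s, w i • f (z i) := by
        rw [hqf, Finset.smul_sum]
        refine Finset.sum_congr rfl fun i hi => ?_
        rw [smul_smul, ← mul_assoc, mul_inv_cancel₀ (ne_of_gt hσpos), one_mul]
      have hwa : w a = 1 - σ := by linarith
      have hwa0 : 0 ≤ w a := hw0 a (Finset.mem_insert_self a s)
      have hwa1 : w a ≤ 1 := by linarith
      have key := haff (z a) hza q hqX (w a) ⟨hwa0, hwa1⟩
      have hσeq : 1 - w a = σ := by linarith
      rw [hσeq] at key
      constructor
      · rw [Finset.sum_insert ha, ← hσq]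
        exact hXv hza hqX hwa0 hσ0 (by linarith)
      · rw [Finset.sum_insert ha, ← hσq, key, Finset.sum_insert ha, ← hσqf]

/-- Let `f : X → Y` be a continuous affine surjective open map of
compact convex subsets of Hausdorff locally convex spaces such that every fiber
has more than one point. Then for every nonempty compact convex `B ⊆ Y` there are
at least two distinct nonempty compact convex subsets `A ⊆ X` with `f(A) = B`. -/
theorem cc_fibers_nontrivial
    (E F : Type*) [AddCommGroup E] [Module ℝ E] [TopologicalSpace E]
    [IsTopologicalAddGroup E] [ContinuousSMul ℝ E] [T2Space E] [LocallyConvexSpace ℝ E]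
    [AddCommGroup F] [Module ℝ F] [TopologicalSpace F]
    [IsTopologicalAddGroup F] [ContinuousSMul ℝ F] [T2Space F] [LocallyConvexSpace ℝ F]
    (X : Set E) (Y : Set F) (hX : IsCompact X) (hXv : Convex ℝ X)
    (hY : IsCompact Y) (hYv : Convex ℝ Y)
    (f : E → F) (hcont : ContinuousOn f X) (hmaps : Set.MapsTo f X Y)
    (haff : ∀ x ∈ X, ∀ y ∈ X, ∀ t : ℝ, t ∈ Set.Icc (0:ℝ) 1 →
      f (t • x + (1 - t) • y) = t • f x + (1 - t) • f y)
    (hsurj : f '' X = Y)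
    (hopen : ∀ U : Set E, IsOpen U → ∃ V : Set F, IsOpen V ∧ f '' (U ∩ X) = V ∩ Y)
    (hfib : ∀ y ∈ Y, ∃ x₁ ∈ X, ∃ x₂ ∈ X, x₁ ≠ x₂ ∧ f x₁ = y ∧ f x₂ = y) :
    ∀ B : Set F, B.Nonempty → IsCompact B → Convex ℝ B → B ⊆ Y →
      ∃ A₁ A₂ : Set E, A₁ ≠ A₂ ∧
        (A₁.Nonempty ∧ IsCompact A₁ ∧ Convex ℝ A₁ ∧ A₁ ⊆ X ∧ f '' A₁ = B) ∧
        (A₂.Nonempty ∧ IsCompact A₂ ∧ Convex ℝ A₂ ∧ A₂ ⊆ X ∧ f '' A₂ = B) := by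
  intro B hBne hBcomp hBconv hBY
  classical
  -- the full preimage A₁
  set A₁ : Set E := X ∩ f ⁻¹' B with hA₁def
  have hA₁X : A₁ ⊆ X := inter_subset_left
  have hA₁cl : IsClosed A₁ := hcont.preimage_isClosed_of_isClosed hX.isClosed hBcomp.isClosed
  have hA₁comp : IsCompact A₁ := hX.of_isClosed_subset hA₁cl hA₁X
  have hA₁conv : Convex ℝ A₁ := by
    intro x hx y hy a b ha hb hab
    refine ⟨hXv hx.1 hy.1 ha hb hab, ?_⟩
    have hb1 : b = 1 - a := by linarith
    have hf := haff x hx.1 y hy.1 a ⟨ha, by linarith⟩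
    simp only [Set.mem_preimage] at hx hy ⊢
    rw [hb1, hf]
    exact hBconv hx.2 hy.2 ha (by linarith) (by linarith)
  have hA₁img : f '' A₁ = B := by
    apply Subset.antisymm
    · rintro _ ⟨x, hx, rfl⟩; exact hx.2
    · intro y hy
      have hyY : y ∈ Y := hBY hy
      rw [← hsurj] at hyY
      obtain ⟨x, hxX, rfl⟩ := hyY
      exact ⟨x, ⟨hxX, hy⟩, rfl⟩
  have hA₁ne : A₁.Nonempty := by
    obtain ⟨y, hy⟩ := hBne
    have : y ∈ f '' A₁ := hA₁img.symm ▸ hy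
    obtain ⟨x, hx, _⟩ := this
    exact ⟨x, hx⟩
  -- fibers over points of B
  have hfibne : ∀ y ∈ B, ∃ x ∈ A₁, f x = y := by
    intro y hy
    have : y ∈ f '' A₁ := hA₁img.symm ▸ hy
    obtain ⟨x, hx, hfx⟩ := this
    exact ⟨x, hx, hfx⟩
  have hfibcl : ∀ y : F, IsClosed (X ∩ f ⁻¹' {y}) := fun y =>
    hcont.preimage_isClosed_of_isClosed hX.isClosed isClosed_singleton
  -- extreme point of B
  obtain ⟨y₀, hy₀ext⟩ := hBcomp.extremePoints_nonempty hBne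
  have hy₀B : y₀ ∈ B := hy₀ext.1
  -- the fiber over y₀
  set F₀ : Set E := X ∩ f ⁻¹' {y₀} with hF₀def
  have hF₀comp : IsCompact F₀ := hX.of_isClosed_subset (hfibcl y₀) inter_subset_left
  have hF₀A₁ : F₀ ⊆ A₁ := by
    rintro x ⟨hxX, hfx⟩
    simp only [Set.mem_preimage, Set.mem_singleton_iff] at hfx
    exact ⟨hxX, by simp [Set.mem_preimage, hfx, hy₀B]⟩
  obtain ⟨p, hpX, q, hqX, hpq, hfp, hfq⟩ := hfib y₀ (hBY hy₀B)
  have hpF₀ : p ∈ F₀ := ⟨hpX, by simp [hfp]⟩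
  have hqF₀ : q ∈ F₀ := ⟨hqX, by simp [hfq]⟩
  have hF₀ne : F₀.Nonempty := ⟨p, hpF₀⟩
  -- separating functional
  obtain ⟨ℓ, hℓpq⟩ := SeparatingDual.exists_separating_of_ne (R := ℝ) hpq
  -- min and max of ℓ on the fiber
  obtain ⟨x₁, hx₁F, hx₁min⟩ := hF₀comp.exists_isMinOn hF₀ne ℓ.continuous.continuousOn
  obtain ⟨x₂, hx₂F, hx₂max⟩ := hF₀comp.exists_isMaxOn hF₀ne ℓ.continuous.continuousOn
  have hx₁min' : ∀ x ∈ F₀, ℓ x₁ ≤ ℓ x := fun x hx => hx₁min hx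
  have hx₂max' : ∀ x ∈ F₀, ℓ x ≤ ℓ x₂ := fun x hx => hx₂max hx
  have hlt : ℓ x₁ < ℓ x₂ := by
    by_contra hcon
    push_neg at hcon
    have h1 := hx₁min' p hpF₀
    have h2 := hx₁min' q hqF₀
    have h3 := hx₂max' p hpF₀
    have h4 := hx₂max' q hqF₀
    exact hℓpq (by linarith)
  set ε : ℝ := (ℓ x₂ - ℓ x₁) / 4 with hεdef
  have hεpos : 0 < ε := by rw [hεdef]; linarith
  have hε4 : ℓ x₂ = ℓ x₁ + 4 * ε := by rw [hεdef]; ring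
  -- maximum of ℓ on A₁
  obtain ⟨xM, hxM, hMmax⟩ := hA₁comp.exists_isMaxOn hA₁ne ℓ.continuous.continuousOn
  set M : ℝ := ℓ xM with hMdef
  have hMbound : ∀ x ∈ A₁, ℓ x ≤ M := fun x hx => hMmax hx
  have hx₂A₁ : x₂ ∈ A₁ := hF₀A₁ hx₂F
  have hx₁A₁ : x₁ ∈ A₁ := hF₀A₁ hx₁F
  have hMge : ℓ x₂ ≤ M := hMbound x₂ hx₂A₁
  have hMpos : 0 < M - ℓ x₁ - ε := by linarith
  -- open V₀ from openness of f
  obtain ⟨V₀, hV₀open, hV₀img⟩ := hopen {x : E | ℓ x < ℓ x₁ + ε}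
    (isOpen_lt ℓ.continuous continuous_const)
  have hfx₁ : f x₁ = y₀ := by
    have := hx₁F.2; simpa [Set.mem_preimage, Set.mem_singleton_iff] using this
  have hfx₂ : f x₂ = y₀ := by
    have := hx₂F.2; simpa [Set.mem_preimage, Set.mem_singleton_iff] using this
  have hy₀V₀ : y₀ ∈ V₀ := by
    have hx₁mem : x₁ ∈ {x : E | ℓ x < ℓ x₁ + ε} ∩ X := ⟨by simp [hεpos], hx₁F.1⟩
    have : f x₁ ∈ V₀ ∩ Y := hV₀img ▸ ⟨x₁, hx₁mem, rfl⟩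
    rw [hfx₁] at this
    exact this.1
  have hVsmall : ∀ y ∈ B, y ∈ V₀ → ∃ u ∈ A₁, f u = y ∧ ℓ u < ℓ x₁ + ε := by
    intro y hy hyV
    have hyY : y ∈ V₀ ∩ Y := ⟨hyV, hBY hy⟩
    rw [← hV₀img] at hyY
    obtain ⟨u, ⟨huU, huX⟩, rfl⟩ := hyY
    exact ⟨u, ⟨huX, hy⟩, rfl, huU⟩
  -- the set of fiberwise minimizers
  set S : Set E := {x ∈ A₁ | ∀ x' ∈ A₁, f x' = f x → ℓ x ≤ ℓ x'} with hSdef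
  have hSA₁ : S ⊆ A₁ := fun x hx => hx.1
  have hSfib : ∀ y ∈ B, ∃ x ∈ S, f x = y := by
    intro y hy
    set Fy : Set E := X ∩ f ⁻¹' {y} with hFydef
    have hFycomp : IsCompact Fy := hX.of_isClosed_subset (hfibcl y) inter_subset_left
    have hFyne : Fy.Nonempty := by
      obtain ⟨x, hx, hfx⟩ := hfibne y hy
      exact ⟨x, hx.1, by simp [Set.mem_preimage, hfx]⟩
    obtain ⟨z, hzFy, hzmin⟩ := hFycomp.exists_isMinOn hFyne ℓ.continuous.continuousOn
    have hfz : f z = y := by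
      have := hzFy.2; simpa [Set.mem_preimage, Set.mem_singleton_iff] using this
    refine ⟨z, ⟨⟨hzFy.1, by simp [Set.mem_preimage, hfz, hy]⟩, ?_⟩, hfz⟩
    intro x' hx' hfx'
    exact hzmin (⟨hx'.1, by simp [Set.mem_preimage, hfx', hfz]⟩ : x' ∈ Fy)
  have hSbound : ∀ x ∈ S, f x ∈ V₀ → ℓ x < ℓ x₁ + ε := by
    intro x hx hfxV
    have hfxB : f x ∈ B := hx.1.2
    obtain ⟨u, huA₁, hfu, hu⟩ := hVsmall (f x) hfxB hfxV
    exact lt_of_le_of_lt (hx.2 u huA₁ hfu) hu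
  have hSboundM : ∀ x ∈ S, ℓ x ≤ M := fun x hx => hMbound x (hSA₁ hx)
  have hSne : S.Nonempty := by
    obtain ⟨z, hz, _⟩ := hSfib y₀ hy₀B
    exact ⟨z, hz⟩
  -- A₂
  set A₂ : Set E := closure (convexHull ℝ S) with hA₂def
  have hA₂A₁ : A₂ ⊆ A₁ := closure_minimal (convexHull_min hSA₁ hA₁conv) hA₁cl
  have hA₂comp : IsCompact A₂ := hA₁comp.of_isClosed_subset isClosed_closure hA₂A₁
  have hA₂conv : Convex ℝ A₂ := (convex_convexHull ℝ S).closure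
  have hA₂ne : A₂.Nonempty := hSne.mono ((subset_convexHull ℝ S).trans subset_closure)
  have hA₂img : f '' A₂ = B := by
    apply Subset.antisymm
    · have : f '' A₂ ⊆ f '' A₁ := image_mono hA₂A₁
      rwa [hA₁img] at this
    · intro y hy
      obtain ⟨z, hz, hfz⟩ := hSfib y hy
      exact ⟨z, (subset_convexHull ℝ S).trans subset_closure hz, hfz⟩
  -- Milman: y₀ not in closed hull of B \ V₀
  set C : Set F := closure (convexHull ℝ (B \ V₀)) with hCdef
  have hCB : C ⊆ B := closure_minimal (convexHull_min diff_subset hBconv) hBcomp.isClosed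
  have hCcomp : IsCompact C := hBcomp.of_isClosed_subset isClosed_closure hCB
  have hy₀C : y₀ ∉ C := my_milman hBcomp hBconv hy₀ext hV₀open hy₀V₀
  -- the compact obstruction set D and its complement W
  set δ : ℝ := ε / (M - ℓ x₁ - ε) with hδdef
  have hδpos : 0 < δ := div_pos hεpos hMpos
  have hδε : δ * (M - ℓ x₁ - ε) = ε := div_mul_cancel₀ ε (ne_of_gt hMpos)
  set D : Set F := (fun pr : ℝ × F × F => pr.1 • pr.2.1 + (1 - pr.1) • pr.2.2) ''
    (Icc δ 1 ×ˢ C ×ˢ B) with hDdef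
  have hDcomp : IsCompact D :=
    ((isCompact_Icc.prod (hCcomp.prod hBcomp)).image (by fun_prop))
  have hy₀D : y₀ ∉ D := by
    rintro ⟨⟨s, c, b⟩, ⟨⟨hs1', hs2'⟩, hc', hb'⟩, heq⟩
    have heq' : s • c + (1 - s) • b = y₀ := heq
    have hs1 : δ ≤ s := hs1'
    have hs2 : s ≤ 1 := hs2'
    have hc : c ∈ C := hc'
    have hb : b ∈ B := hb'
    rcases eq_or_lt_of_le hs2 with hseq | hslt
    · rw [hseq] at heq'
      simp only [one_smul, sub_self, zero_smul, add_zero] at heq'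
      exact hy₀C (heq' ▸ hc)
    · have hy₀seg : y₀ ∈ openSegment ℝ c b :=
        ⟨s, 1 - s, lt_of_lt_of_le hδpos hs1, by linarith, by ring, heq'⟩
      have hceq := hy₀ext.2 (hCB hc) hb hy₀seg
      exact hy₀C (hceq ▸ hc)
  set W : Set F := Dᶜ with hWdef
  have hWopen : IsOpen W := hDcomp.isClosed.isOpen_compl
  have hy₀W : y₀ ∈ W := hy₀D
  -- neighborhood N' of x₂ mapping into W
  have hcw : ContinuousWithinAt f X x₂ := hcont x₂ hx₂F.1
  have hWnhds : W ∈ 𝓝 (f x₂) := by rw [hfx₂]; exact hWopen.mem_nhds hy₀W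
  obtain ⟨N', hN'open, hx₂N', hN'sub⟩ := mem_nhdsWithin.1 (hcw hWnhds)
  -- key bound on the convex hull of S inside N'
  have key : ∀ x ∈ convexHull ℝ S, x ∈ N' → ℓ x ≤ ℓ x₁ + 2 * ε := by
    intro x hxhull hxN'
    rw [convexHull_eq] at hxhull
    obtain ⟨ι, t, w, z, hw0, hw1, hzS, hcm⟩ := hxhull
    have hxe : ∑ i ∈ t, w i • z i = x := by
      rw [← Finset.centerMass_eq_of_sum_1 _ _ hw1]; exact hcm
    have hzX : ∀ i ∈ t, z i ∈ X := fun i hi => hA₁X (hSA₁ (hzS i hi))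
    obtain ⟨hxX, hfx⟩ := my_affine_sum hXv f haff t w z hw0 hw1 hzX
    rw [hxe] at hxX hfx
    have hfxW : f x ∈ W := hN'sub ⟨hxN', hxX⟩
    set t_in : Finset ι := t.filter (fun i => f (z i) ∈ V₀) with htin
    set t_out : Finset ι := t.filter (fun i => f (z i) ∉ V₀) with htout
    set s' : ℝ := ∑ i ∈ t_out, w i with hs'def
    have hw0in : ∀ i ∈ t_in, 0 ≤ w i := fun i hi => hw0 i (Finset.mem_filter.1 hi).1
    have hw0out : ∀ i ∈ t_out, 0 ≤ w i := fun i hi => hw0 i (Finset.mem_filter.1 hi).1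
    have hsplit : ∑ i ∈ t_in, w i + ∑ i ∈ t_out, w i = 1 := by
      rw [← hw1]; exact Finset.sum_filter_add_sum_filter_not t _ w
    have hs'0 : 0 ≤ s' := Finset.sum_nonneg hw0out
    have hs'1 : s' ≤ 1 := by
      have h0 : 0 ≤ ∑ i ∈ t_in, w i := Finset.sum_nonneg hw0in
      linarith
    have hsplitf : ∑ i ∈ t_in, w i • f (z i) + ∑ i ∈ t_out, w i • f (z i)
        = ∑ i ∈ t, w i • f (z i) := Finset.sum_filter_add_sum_filter_not t _ _
    -- the out-mass is < δ
    have hs'δ : s' < δ := by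
      by_contra hge
      push_neg at hge
      have hs'pos : 0 < s' := lt_of_lt_of_le hδpos hge
      have houtmem : ∀ i ∈ t_out, f (z i) ∈ B \ V₀ := by
        intro i hi
        obtain ⟨hit, hnot⟩ := Finset.mem_filter.1 hi
        exact ⟨(hzS i hit).1.2, hnot⟩
      have hcC : t_out.centerMass w (fun i => f (z i)) ∈ C := by
        refine subset_closure (Finset.centerMass_mem_convexHull t_out hw0out ?_ houtmem)
        rwa [← hs'def]
      have hcCM : t_out.centerMass w (fun i => f (z i))
          = (s')⁻¹ • ∑ i ∈ t_out, w i • f (z i) := by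
        rw [Finset.centerMass, ← hs'def]
      rcases eq_or_lt_of_le hs'1 with hs1 | hs1
      · -- s' = 1 : all mass is outside
        have hinzero : ∀ i ∈ t_in, w i = 0 := by
          have hsum0 : ∑ i ∈ t_in, w i = 0 := by linarith
          exact fun i hi => (Finset.sum_eq_zero_iff_of_nonneg hw0in).1 hsum0 i hi
        have hinzero' : ∑ i ∈ t_in, w i • f (z i) = 0 :=
          Finset.sum_eq_zero fun i hi => by rw [hinzero i hi, zero_smul]
        have hfxc : f x = t_out.centerMass w (fun i => f (z i)) := by
          rw [hcCM, hs1, inv_one, one_smul, hfx, ← hsplitf, hinzero', zero_add]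
        apply hfxW
        refine ⟨(1, t_out.centerMass w (fun i => f (z i)), y₀),
          ⟨⟨show δ ≤ (1:ℝ) by linarith, le_refl 1⟩, hcC, hy₀B⟩, ?_⟩
        show (1:ℝ) • t_out.centerMass w (fun i => f (z i)) + (1 - 1:ℝ) • y₀ = f x
        simp only [one_smul, sub_self, zero_smul, add_zero]
        exact hfxc.symm
      · -- s' < 1
        have hin1 : ∑ i ∈ t_in, w i = 1 - s' := by linarith
        have hinpos : (0:ℝ) < 1 - s' := by linarith
        have hbB : t_in.centerMass w (fun i => f (z i)) ∈ B := by
          have : t_in.centerMass w (fun i => f (z i)) ∈ convexHull ℝ B := by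
            refine Finset.centerMass_mem_convexHull t_in hw0in ?_
              (fun i hi => (hzS i (Finset.mem_filter.1 hi).1).1.2)
            rw [hin1]; exact hinpos
          rwa [hBconv.convexHull_eq] at this
        have hbCM : t_in.centerMass w (fun i => f (z i))
            = (1 - s')⁻¹ • ∑ i ∈ t_in, w i • f (z i) := by
          rw [Finset.centerMass, hin1]
        apply hfxW
        refine ⟨(s', t_out.centerMass w (fun i => f (z i)),
          t_in.centerMass w (fun i => f (z i))), ⟨⟨hge, hs'1⟩, hcC, hbB⟩, ?_⟩
        show s' • t_out.centerMass w (fun i => f (z i))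
          + (1 - s') • t_in.centerMass w (fun i => f (z i)) = f x
        rw [hcCM, hbCM, smul_inv_smul₀ (ne_of_gt hs'pos), smul_inv_smul₀ (ne_of_gt hinpos),
          add_comm, hsplitf, hfx]
    -- bound ℓ x
    have hℓx : ℓ x = ∑ i ∈ t, w i * ℓ (z i) := by
      rw [← hxe, map_sum]
      exact Finset.sum_congr rfl fun i _ => by rw [map_smul, smul_eq_mul]
    have hℓsplit : ∑ i ∈ t, w i * ℓ (z i)
        = ∑ i ∈ t_in, w i * ℓ (z i) + ∑ i ∈ t_out, w i * ℓ (z i) :=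
      (Finset.sum_filter_add_sum_filter_not t _ _).symm
    have hbound_in : ∑ i ∈ t_in, w i * ℓ (z i) ≤ (1 - s') * (ℓ x₁ + ε) := by
      have h1 : ∑ i ∈ t_in, w i * ℓ (z i) ≤ ∑ i ∈ t_in, w i * (ℓ x₁ + ε) := by
        refine Finset.sum_le_sum fun i hi => ?_
        obtain ⟨hit, hiV⟩ := Finset.mem_filter.1 hi
        exact mul_le_mul_of_nonneg_left (le_of_lt (hSbound _ (hzS i hit) hiV)) (hw0in i hi)
      rw [← Finset.sum_mul] at h1
      have hin1 : ∑ i ∈ t_in, w i = 1 - s' := by linarith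
      rwa [hin1] at h1
    have hbound_out : ∑ i ∈ t_out, w i * ℓ (z i) ≤ s' * M := by
      have h1 : ∑ i ∈ t_out, w i * ℓ (z i) ≤ ∑ i ∈ t_out, w i * M := by
        refine Finset.sum_le_sum fun i hi => ?_
        exact mul_le_mul_of_nonneg_left (hSboundM _ (hzS i (Finset.mem_filter.1 hi).1))
          (hw0out i hi)
      rw [← Finset.sum_mul] at h1
      rwa [← hs'def] at h1
    have hδmul : s' * (M - ℓ x₁ - ε) ≤ δ * (M - ℓ x₁ - ε) :=
      mul_le_mul_of_nonneg_right (le_of_lt hs'δ) (le_of_lt hMpos)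
    rw [hδε] at hδmul
    rw [hℓx, hℓsplit]
    nlinarith [hbound_in, hbound_out]
  -- x₂ is not in A₂
  have hx₂A₂ : x₂ ∉ A₂ := by
    intro hmem
    have hNopen : IsOpen (N' ∩ {x : E | ℓ x₁ + 2 * ε < ℓ x}) :=
      hN'open.inter (isOpen_lt continuous_const ℓ.continuous)
    have hx₂N : x₂ ∈ N' ∩ {x : E | ℓ x₁ + 2 * ε < ℓ x} :=
      ⟨hx₂N', by simp only [Set.mem_setOf_eq]; linarith⟩
    obtain ⟨x, ⟨hxN', hxℓ⟩, hxhull⟩ :=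
      mem_closure_iff.1 hmem _ hNopen hx₂N
    have := key x hxhull hxN'
    simp only [Set.mem_setOf_eq] at hxℓ
    linarith
  -- conclusion
  refine ⟨A₁, A₂, ?_, ⟨hA₁ne, hA₁comp, hA₁conv, hA₁X, hA₁img⟩,
    ⟨hA₂ne, hA₂comp, hA₂conv, hA₂A₁.trans hA₁X, hA₂img⟩⟩
  intro heq
  rw [heq] at hx₂A₁
  exact hx₂A₂ hx₂A₁
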